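/- Composition of approximations: if A₁ : C ⇀ C̄ is S-proper and A₂ : C̄ ⇀ C' is (S¦A₁)-proper, then applying A₂ to the approximated automaton ℳ¦A₁ equals applying the composed strategy A₁ ; A₂ to ℳ, i.e., (ℳ¦A₁)¦A₂ = ℳ¦(A₁;A₂). -/

import Mathlib

/-- A transition of an automaton with data storage. -/
structure Tr (Q C Sym : Type) where
  src : Q
  lab : Option Sym
  pred : Set C
  instr : Set (C × C)
  tgt : Q

/-- One-step transition relation of a single transition. -/
def trStep {Q C Sym : Type} (τ : Tr Q C Sym) :
    Q × C × List Sym → Q × C × List Sym → Prop := fun x y =>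
  x.1 = τ.src ∧ y.1 = τ.tgt ∧ x.2.1 ∈ τ.pred ∧ (x.2.1, y.2.1) ∈ τ.instr ∧
    x.2.2 = τ.lab.toList ++ y.2.2

/-- Transition relation along a sequence of transitions. -/
def runSeq {Q C Sym : Type} :
    List (Tr Q C Sym) → (Q × C × List Sym) → (Q × C × List Sym) → Prop
  | [], x, y => x = y
  | τ :: θ, x, y => ∃ z, trStep τ x z ∧ runSeq θ z y

/-- An automaton with data storage (states `Q`, storage configurations `C`,
input alphabet `Sym`). -/
structure Aut (Q C Sym : Type) where
  T : Set (Tr Q C Sym)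
  Tfin : T.Finite
  Qi : Set Q
  Qf : Set Q

/-- The language of an automaton, given an initial storage configuration. -/
def langOf {Q C Sym : Type} (init : C) (M : Aut Q C Sym) : Set (List Sym) :=
  {w | ∃ θ : List (Tr Q C Sym), (∀ τ ∈ θ, τ ∈ M.T) ∧
    ∃ q ∈ M.Qi, ∃ q' ∈ M.Qf, ∃ c', runSeq θ (q, init, w) (q', c', [])}

/-- The language, where the initial storage configuration may be undefined. -/
def langOptOf {Q C Sym : Type} (initO : Option C) (M : Aut Q C Sym) :
    Set (List Sym) :=
  {w | ∃ c₀, initO = some c₀ ∧ w ∈ langOf c₀ M}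

/-- A data storage: predicates, instructions, an initial configuration,
such that `r(c)` is finite for every instruction `r` and configuration `c`. -/
structure DS (C : Type) where
  preds : Set (Set C)
  instrs : Set (Set (C × C))
  init : C
  fin : ∀ r ∈ instrs, ∀ c : C, {c' | (c, c') ∈ r}.Finite

/-- An automaton is an `(S,Σ)`-automaton if all its predicates and instructions
come from the data storage `S`. -/
def ValidFor {Q C Sym : Type} (S : DS C) (M : Aut Q C Sym) : Prop :=
  ∀ τ ∈ M.T, τ.pred ∈ S.preds ∧ τ.instr ∈ S.instrs

/-- Approximation of a predicate: the image `A(p)`. -/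
def appPred {C C' : Type} (A : C → Option C') (p : Set C) : Set C' :=
  {c' | ∃ c ∈ p, A c = some c'}

/-- Approximation of an instruction: `A⁻¹ ; r ; A`. -/
def appRel {C C' : Type} (A : C → Option C') (r : Set (C × C)) :
    Set (C' × C') :=
  {x | ∃ c₁ c₂, A c₁ = some x.1 ∧ (c₁, c₂) ∈ r ∧ A c₂ = some x.2}

/-- `A` is proper for a set of instructions if `(A⁻¹;r;A)(c')` is finite. -/
def ProperFor {C C' : Type} (A : C → Option C')
    (Rs : Set (Set (C × C))) : Prop :=
  ∀ r ∈ Rs, ∀ c' : C', {c₂' | (c', c₂') ∈ appRel A r}.Finite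

/-- Approximation of a transition. -/
def appTr {Q C C' Sym : Type} (A : C → Option C') (τ : Tr Q C Sym) :
    Tr Q C' Sym :=
  ⟨τ.src, τ.lab, appPred A τ.pred, appRel A τ.instr, τ.tgt⟩

/-- Approximation of an automaton with respect to `A`. -/
def appAut {Q C C' Sym : Type} (A : C → Option C') (M : Aut Q C Sym) :
    Aut Q C' Sym :=
  ⟨appTr A '' M.T, M.Tfin.image _, M.Qi, M.Qf⟩

/-- Totality of an approximation strategy. -/
def TotalStrat {C C' : Type} (A : C → Option C') : Prop :=
  ∀ c, (A c).isSome

/-- Injectivity of a partial function. -/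
def InjStrat {C C' : Type} (A : C → Option C') : Prop :=
  ∀ c₁ c₂ c', A c₁ = some c' → A c₂ = some c' → c₁ = c₂

lemma appTr_comp {Q C Cb C' Sym : Type} (A₁ : C → Option Cb)
    (A₂ : Cb → Option C') (τ : Tr Q C Sym) :
    appTr A₂ (appTr A₁ τ) = appTr (fun c => (A₁ c).bind A₂) τ := by
  unfold appTr
  congr 1
  · ext c'
    simp only [appPred, Set.mem_setOf_eq]
    constructor
    · rintro ⟨cb, ⟨c, hc, h1⟩, h2⟩
      exact ⟨c, hc, by simp [h1, h2]⟩
    · rintro ⟨c, hc, h⟩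
      rcases Option.bind_eq_some_iff.mp h with ⟨cb, h1, h2⟩
      exact ⟨cb, ⟨c, hc, h1⟩, h2⟩
  · ext ⟨x, y⟩
    simp only [appRel, Set.mem_setOf_eq]
    constructor
    · rintro ⟨b₁, b₂, hb₁, ⟨c₁, c₂, hc₁, hr, hc₂⟩, hb₂⟩
      exact ⟨c₁, c₂, by simp [hc₁, hb₁], hr, by simp [hc₂, hb₂]⟩
    · rintro ⟨c₁, c₂, h1, hr, h2⟩
      rcases Option.bind_eq_some_iff.mp h1 with ⟨b₁, hb₁, hb₁'⟩
      rcases Option.bind_eq_some_iff.mp h2 with ⟨b₂, hb₂, hb₂'⟩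
      exact ⟨b₁, b₂, hb₁', ⟨c₁, c₂, hb₁, hr, hb₂⟩, hb₂'⟩

/-- Composition of approximations: `(ℳ¦A₁)¦A₂ = ℳ¦(A₁;A₂)`. -/
theorem app_comp {Q C Cb C' Sym : Type} (S : DS C) (M : Aut Q C Sym)
    (hval : ValidFor S M) (A₁ : C → Option Cb) (A₂ : Cb → Option C')
    (h₁ : ProperFor A₁ S.instrs) (h₂ : ProperFor A₂ (appRel A₁ '' S.instrs)) :
    appAut A₂ (appAut A₁ M) = appAut (fun c => (A₁ c).bind A₂) M := by
  unfold appAut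
  simp only [Set.image_image, appTr_comp]
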